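/- Assume ω₁ < 𝔟. Let X be a set and (A_s)_{s ∈ ω^ω} a family of at most countable subsets of X such that X = ⋃_{s ∈ ω^ω} A_s and A_s ⊆ A_t whenever s(n) ≤ t(n) for all n ∈ ω. Then X is at most countable. -/

import Mathlib

open Cardinal Set Topology

universe u

def FunctionallyHausdorff (X : Type u) [TopologicalSpace X] : Prop :=
  ∀ x y : X, x ≠ y → ∃ f : X → unitInterval, Continuous f ∧ f x = 0 ∧ f y = 1

def IsCechComplete (X : Type u) [TopologicalSpace X] : Prop :=
  ∃ (K : Type u) (_ : TopologicalSpace K) (e : X → K),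
    CompactSpace K ∧ T2Space K ∧ IsEmbedding e ∧ DenseRange e ∧ IsGδ (Set.range e)

noncomputable def lindelofNumber (X : Type u) [TopologicalSpace X] : Cardinal.{u} :=
  sInf {κ : Cardinal.{u} | ℵ₀ ≤ κ ∧ ∀ U : Set (Set X), (∀ u ∈ U, IsOpen u) → ⋃₀ U = Set.univ →
    ∃ V ⊆ U, #↥V ≤ κ ∧ ⋃₀ V = Set.univ}

noncomputable def pseudocharacter (X : Type u) [TopologicalSpace X] : Cardinal.{u} :=
  sInf {κ : Cardinal.{u} | ℵ₀ ≤ κ ∧ ∀ x : X, ∃ 𝒰 : Set (Set X),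
    #↥𝒰 ≤ κ ∧ (∀ U ∈ 𝒰, IsOpen U ∧ x ∈ U) ∧ ⋂₀ 𝒰 = ⋂₀ {U : Set X | IsOpen U ∧ x ∈ U}}

def IsScatteredSet {X : Type u} [TopologicalSpace X] (S : Set X) : Prop :=
  ∀ T ⊆ S, T.Nonempty → ∃ x ∈ T, ∃ U : Set X, IsOpen U ∧ U ∩ T = {x}

def IsKAnalytic (X : Type u) [TopologicalSpace X] : Prop :=
  ∃ (P : Type u) (_ : TopologicalSpace P) (f : P → X),
    LindelofSpace P ∧ IsCechComplete P ∧ Continuous f ∧ Function.Surjective f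

def IsAnalyticSpace (X : Type u) [TopologicalSpace X] : Prop :=
  ∃ (P : Type u) (_ : TopologicalSpace P), PolishSpace P ∧
    ∃ f : P → X, Continuous f ∧ Function.Surjective f

noncomputable def boundingNumber : Cardinal.{0} :=
  sInf {κ : Cardinal.{0} | ∃ B : Set (ℕ → ℕ), #↥B = κ ∧
    ∀ y : ℕ → ℕ, ∃ x ∈ B, {n : ℕ | ¬ x n ≤ y n}.Infinite}

theorem stmt13 (hb : Cardinal.aleph 1 < boundingNumber)
    {X : Type u} (A : (ℕ → ℕ) → Set X)
    (hcount : ∀ s, (A s).Countable)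
    (hcover : ⋃ s : ℕ → ℕ, A s = Set.univ)
    (hmono : ∀ s t : ℕ → ℕ, (∀ n, s n ≤ t n) → A s ⊆ A t) :
    Countable X := by
  by_contra hX
  -- X is uncountable, so ℵ₁ ≤ #X
  have hX1 : (Cardinal.aleph 1 : Cardinal.{u}) ≤ #X := by
    rw [← Cardinal.mk_univ]
    by_contra h
    push_neg at h
    rw [← Cardinal.countable_iff_lt_aleph_one] at h
    exact hX (Set.countable_univ_iff.mp h)
  set W : Type := (Cardinal.aleph 1 : Cardinal.{0}).ord.ToType with hW
  have hWcard : #W = Cardinal.aleph 1 := Cardinal.mk_ord_toType _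
  have hemb : Nonempty (W ↪ X) := by
    rw [← Cardinal.lift_mk_le', hWcard, Cardinal.lift_id'.{0,u}]
    calc Cardinal.lift.{u} (Cardinal.aleph 1) = Cardinal.aleph 1 := by
          rw [Cardinal.lift_aleph]; simp
      _ ≤ #X := hX1
  obtain ⟨g⟩ := hemb
  -- choose an index for each point of W
  have hchoice : ∀ w : W, ∃ s : ℕ → ℕ, g w ∈ A s := by
    intro w
    have : g w ∈ ⋃ s : ℕ → ℕ, A s := hcover ▸ Set.mem_univ _
    exact Set.mem_iUnion.mp this
  choose s hs using hchoice
  -- the family {s w} is bounded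
  obtain ⟨y, hy⟩ : ∃ y : ℕ → ℕ, ∀ w, {n : ℕ | ¬ s w n ≤ y n}.Finite := by
    by_contra h
    push_neg at h
    have hmem : #↥(Set.range s) ∈ {κ : Cardinal.{0} | ∃ B : Set (ℕ → ℕ), #↥B = κ ∧
        ∀ y : ℕ → ℕ, ∃ x ∈ B, {n : ℕ | ¬ x n ≤ y n}.Infinite} := by
      refine ⟨Set.range s, rfl, fun y => ?_⟩
      obtain ⟨w, hw⟩ := h y
      exact ⟨s w, Set.mem_range_self w, by simpa only [Set.Infinite, not_le] using hw⟩
    have h1 : boundingNumber ≤ #↥(Set.range s) := csInf_le' hmem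
    have h2 : #↥(Set.range s) ≤ #W := Cardinal.mk_range_le
    rw [hWcard] at h2
    exact absurd (h1.trans h2) (not_le.mpr hb)
  -- the set of functions eventually equal to y is countable
  set E : Set (ℕ → ℕ) := {f | {n : ℕ | f n ≠ y n}.Finite} with hE
  have hEc : E.Countable := by
    rw [← Set.countable_coe_iff]
    have : Function.Injective (fun f : ↥E =>
        Finsupp.ofSupportFinite (fun n => if (f : ℕ → ℕ) n = y n then 0 else (f : ℕ → ℕ) n + 1)
          (Set.Finite.subset f.2 (by
            intro n hn
            simp only [Function.mem_support] at hn
            by_contra hne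
            simp only [Set.mem_setOf_eq, not_not] at hne
            exact hn (by simp [hne])))) := by
      intro f₁ f₂ hf
      have hf' := congrArg (fun F : ℕ →₀ ℕ => (F : ℕ → ℕ)) hf
      simp only [Finsupp.ofSupportFinite_coe] at hf'
      ext n
      have := congrFun hf' n
      by_cases h1 : (f₁ : ℕ → ℕ) n = y n <;> by_cases h2 : (f₂ : ℕ → ℕ) n = y n <;>
        [skip;skip;skip;skip] <;> simp [h1, h2] at this ⊢ <;> omega
    exact this.countable
  -- the countable set D covers the range of g
  set D : Set X := ⋃ f ∈ E, A f with hD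
  have hDc : D.Countable := hEc.biUnion (fun f _ => hcount f)
  have hmemD : ∀ w : W, g w ∈ D := by
    intro w
    have h1 : (fun n => max (s w n) (y n)) ∈ E := by
      refine (hy w).subset ?_
      intro n hn
      simp only [Set.mem_setOf_eq] at hn ⊢
      intro hle
      exact hn (by rw [max_eq_right hle])
    exact Set.mem_biUnion h1 (hmono _ _ (fun n => le_max_left _ _) (hs w))
  -- contradiction: W has cardinality ℵ₁ but injects into a countable set
  have : Countable W := by
    have hcd : Countable ↥D := hDc.to_subtype
    exact Function.Injective.countable (f := fun w : W => (⟨g w, hmemD w⟩ : ↥D))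
      (fun a b hab => g.injective (congrArg Subtype.val hab))
  have := Cardinal.mk_le_aleph0_iff.mpr this
  rw [hWcard] at this
  exact absurd this (not_le.mpr Cardinal.aleph0_lt_aleph_one)
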